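/- Let K ≥ 2 and let μ be a probability measure on ℝ^K such that for every k ∈ {1,…,K}, the set {v ∈ ℝ^K : v_k = (1/K) Σ_{i=1}^K v_i} has μ-measure zero. Then for μ-almost every v ∈ ℝ^K, EvSoftmax is differentiable at v with partial derivatives ∂EvSoftmax(v)_i/∂v_j = EvSoftmax(v)_i·(δ_{ij} − EvSoftmax(v)_j) for all i, j ∈ {1,…,K}. -/

import Mathlib

open Finset MeasureTheory

/-- The ev-softmax function:
`EvSoftmax(v)_k = 𝟙{v_k ≥ v̄} e^{v_k} / ∑_l 𝟙{v_l ≥ v̄} e^{v_l}`,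
where `v̄` is the arithmetic mean of `v`. -/
noncomputable def evSoftmax {K : ℕ} (v : Fin K → ℝ) (k : Fin K) : ℝ :=
  (if (∑ i : Fin K, v i) / K ≤ v k then Real.exp (v k) else 0) /
    ∑ l : Fin K, (if (∑ i : Fin K, v i) / K ≤ v l then Real.exp (v l) else 0)

open Filter in
/-- If `μ` is a probability measure on `ℝ^K` (`K ≥ 2`) assigning
measure zero to each hyperplane `{v : v k = v̄}`, then `μ`-almost everywhere
ev-softmax is differentiable with partial derivatives
`∂EvSoftmax(v)_i/∂v_j = EvSoftmax(v)_i (δ_{ij} - EvSoftmax(v)_j)`. -/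
theorem evSoftmax_jacobian_ae
    (K : ℕ) (hK : 2 ≤ K)
    (μ : Measure (Fin K → ℝ)) [IsProbabilityMeasure μ]
    (hμ : ∀ k : Fin K, μ {v | v k = (∑ i : Fin K, v i) / K} = 0) :
    ∀ᵐ v ∂μ,
      (∀ i : Fin K, DifferentiableAt ℝ (fun u : Fin K → ℝ => evSoftmax u i) v) ∧
      (∀ i j : Fin K,
        fderiv ℝ (fun u : Fin K → ℝ => evSoftmax u i) v (Pi.single j 1)
          = evSoftmax v i * ((if i = j then (1 : ℝ) else 0) - evSoftmax v j)) := by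
  classical
  have hKpos : (0 : ℝ) < K := by
    have : 0 < K := by omega
    exact_mod_cast this
  have hae : ∀ᵐ v ∂μ, ∀ k : Fin K, v k ≠ (∑ i : Fin K, v i) / (K : ℝ) := by
    rw [ae_all_iff]
    intro k
    rw [ae_iff]
    simpa only [ne_eq, not_not] using hμ k
  filter_upwards [hae] with v hv
  -- the "active set"
  set S : Finset (Fin K) :=
    Finset.univ.filter (fun k => (∑ i : Fin K, v i) / (K : ℝ) < v k) with hSdef
  -- S is nonempty
  have hS_ne : S.Nonempty := by
    have : Nonempty (Fin K) := ⟨⟨0, by omega⟩⟩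
    obtain ⟨k, -, hk⟩ := Finset.exists_max_image Finset.univ v ⟨⟨0, by omega⟩, Finset.mem_univ _⟩
    refine ⟨k, Finset.mem_filter.mpr ⟨Finset.mem_univ _, ?_⟩⟩
    have hle : (∑ i : Fin K, v i) / (K : ℝ) ≤ v k := by
      rw [div_le_iff₀ (by positivity)]
      calc (∑ i : Fin K, v i) ≤ ∑ _i : Fin K, v k :=
            Finset.sum_le_sum fun i _ => hk i (Finset.mem_univ _)
        _ = v k * (K : ℝ) := by simp [mul_comm]
    exact lt_of_le_of_ne hle (Ne.symm (hv k))
  have hg : (0 : ℝ) < ∑ l ∈ S, Real.exp (v l) :=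
    Finset.sum_pos (fun _ _ => Real.exp_pos _) hS_ne
  have hgne : (∑ l ∈ S, Real.exp (v l)) ≠ 0 := ne_of_gt hg
  -- the mean is continuous
  have hmean : Continuous (fun u : Fin K → ℝ => (∑ i : Fin K, u i) / (K : ℝ)) := by
    fun_prop
  -- near v, the conditions are locally determined by S
  have hU : ∀ᶠ u in nhds v, ∀ k : Fin K, ((∑ i : Fin K, u i) / (K : ℝ) ≤ u k ↔ k ∈ S) := by
    rw [Filter.eventually_all]
    intro k
    by_cases hk : k ∈ S
    · have hlt : (∑ i : Fin K, v i) / (K : ℝ) < v k := (Finset.mem_filter.mp hk).2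
      have := hmean.continuousAt.eventually_lt (continuous_apply k).continuousAt hlt
      filter_upwards [this] with u hu
      simp [hk, le_of_lt hu]
    · have hlt : v k < (∑ i : Fin K, v i) / (K : ℝ) := by
        rcases lt_or_gt_of_ne (hv k) with h | h
        · exact h
        · exact absurd (Finset.mem_filter.mpr ⟨Finset.mem_univ k, h⟩) hk
      have := (continuous_apply k).continuousAt.eventually_lt hmean.continuousAt hlt
      filter_upwards [this] with u hu
      simp [hk, not_le.mpr hu]
  -- local smooth model of evSoftmax
  have heq : ∀ i : Fin K, (fun u : Fin K → ℝ => evSoftmax u i) =ᶠ[nhds v]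
      fun u => (if i ∈ S then Real.exp (u i) else 0) / ∑ l ∈ S, Real.exp (u l) := by
    intro i
    filter_upwards [hU] with u hu
    unfold evSoftmax
    congr 1
    · exact if_congr (hu i) rfl rfl
    · calc ∑ l : Fin K, (if (∑ i : Fin K, u i) / K ≤ u l then Real.exp (u l) else 0)
          = ∑ l : Fin K, (if l ∈ S then Real.exp (u l) else 0) :=
            Finset.sum_congr rfl fun l _ => if_congr (hu l) rfl rfl
        _ = ∑ l ∈ S, Real.exp (u l) := by
            rw [Finset.sum_ite_mem, Finset.univ_inter]
  -- derivatives of the model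
  have hgd : HasFDerivAt (fun u : Fin K → ℝ => ∑ l ∈ S, Real.exp (u l))
      (∑ l ∈ S, Real.exp (v l) • (ContinuousLinearMap.proj l : (Fin K → ℝ) →L[ℝ] ℝ)) v := by
    apply HasFDerivAt.fun_sum
    intro l _
    exact (Real.hasDerivAt_exp (v l)).comp_hasFDerivAt v (hasFDerivAt_apply (𝕜 := ℝ) l v)
  have hnum : ∀ i : Fin K, HasFDerivAt (fun u : Fin K → ℝ => if i ∈ S then Real.exp (u i) else 0)
      ((if i ∈ S then Real.exp (v i) else 0) • (ContinuousLinearMap.proj i : (Fin K → ℝ) →L[ℝ] ℝ)) v := by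
    intro i
    by_cases hi : i ∈ S
    · simpa [hi, Function.comp_def] using
        (Real.hasDerivAt_exp (v i)).comp_hasFDerivAt v (hasFDerivAt_apply (𝕜 := ℝ) i v)
    · simpa [hi] using hasFDerivAt_const (0 : ℝ) v
  have hinv : HasFDerivAt (fun u : Fin K → ℝ => (∑ l ∈ S, Real.exp (u l))⁻¹)
      ((-(((∑ l ∈ S, Real.exp (v l)) ^ 2)⁻¹)) • (∑ l ∈ S, Real.exp (v l) • (ContinuousLinearMap.proj l : (Fin K → ℝ) →L[ℝ] ℝ))) v :=
    (hasDerivAt_inv hgne).comp_hasFDerivAt v hgd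
  have hmodel : ∀ i : Fin K, HasFDerivAt
      (fun u : Fin K → ℝ => (if i ∈ S then Real.exp (u i) else 0) / ∑ l ∈ S, Real.exp (u l))
      (((if i ∈ S then Real.exp (v i) else 0) •
          ((-(((∑ l ∈ S, Real.exp (v l)) ^ 2)⁻¹)) •
            (∑ l ∈ S, Real.exp (v l) • (ContinuousLinearMap.proj l : (Fin K → ℝ) →L[ℝ] ℝ)))) +
        ((∑ l ∈ S, Real.exp (v l))⁻¹ •
          ((if i ∈ S then Real.exp (v i) else 0) • (ContinuousLinearMap.proj i : (Fin K → ℝ) →L[ℝ] ℝ)))) v := by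
    intro i
    simpa [div_eq_mul_inv, Pi.mul_def] using (hnum i).mul hinv
  have hfull : ∀ i : Fin K, HasFDerivAt (fun u : Fin K → ℝ => evSoftmax u i)
      (((if i ∈ S then Real.exp (v i) else 0) •
          ((-(((∑ l ∈ S, Real.exp (v l)) ^ 2)⁻¹)) •
            (∑ l ∈ S, Real.exp (v l) • (ContinuousLinearMap.proj l : (Fin K → ℝ) →L[ℝ] ℝ)))) +
        ((∑ l ∈ S, Real.exp (v l))⁻¹ •
          ((if i ∈ S then Real.exp (v i) else 0) • (ContinuousLinearMap.proj i : (Fin K → ℝ) →L[ℝ] ℝ)))) v :=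
    fun i => (hmodel i).congr_of_eventuallyEq (heq i)
  refine ⟨fun i => (hfull i).differentiableAt, fun i j => ?_⟩
  rw [(hfull i).fderiv]
  have hval : ∀ k : Fin K,
      evSoftmax v k = (if k ∈ S then Real.exp (v k) else 0) / ∑ l ∈ S, Real.exp (v l) :=
    fun k => (heq k).eq_of_nhds
  rw [hval i, hval j]
  have happ : ∀ l : Fin K, (ContinuousLinearMap.proj l : (Fin K → ℝ) →L[ℝ] ℝ) (Pi.single j 1)
      = if l = j then 1 else 0 := by
    intro l
    simp [Pi.single_apply]
  simp only [ContinuousLinearMap.add_apply, ContinuousLinearMap.smul_apply,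
    ContinuousLinearMap.coe_sum', Finset.sum_apply, happ, smul_eq_mul,
    mul_ite, mul_one, mul_zero]
  rw [Finset.sum_ite_eq' S j (fun l => Real.exp (v l))]
  by_cases hij : i = j
  · subst hij
    by_cases hi : i ∈ S <;> simp [hi] <;> field_simp <;> ring
  · have hji : j ≠ i := fun h => hij h.symm
    by_cases hi : i ∈ S <;> by_cases hj : j ∈ S <;>
      simp [hi, hj, hij, hji] <;> field_simp <;> ring
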